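/- For s ≥ t ≥ 2, let G = P_s □ P_t be the grid graph, the Cartesian product of the path on s vertices and the path on t vertices. Then cdim(G) = t. -/

import Mathlib

open SimpleGraph

variable {V : Type*}

/-- `S` is a resolving set of `G`. -/
def IsResolving (G : SimpleGraph V) (S : Set V) : Prop :=
  ∀ x y : V, x ≠ y → ∃ z ∈ S, G.dist z x ≠ G.dist z y

/-- `S` is a connected resolving set of `G`. -/
def IsConnResolving (G : SimpleGraph V) (S : Set V) : Prop :=
  IsResolving G S ∧ (G.induce S).Connected

/-- The metric dimension of `G`. -/
noncomputable def metricDim (G : SimpleGraph V) : ℕ :=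
  sInf {n | ∃ S : Set V, IsResolving G S ∧ S.ncard = n}

/-- The connected metric dimension of `G`. -/
noncomputable def cdim (G : SimpleGraph V) : ℕ :=
  sInf {n | ∃ S : Set V, IsConnResolving G S ∧ S.ncard = n}

/-- The connected metric dimension of `G` at a vertex `v`. -/
noncomputable def cdimAt (G : SimpleGraph V) (v : V) : ℕ :=
  sInf {n | ∃ S : Set V, IsConnResolving G S ∧ v ∈ S ∧ S.ncard = n}

/-! ### Auxiliary lemmas -/

/-- A 1-Lipschitz `ℕ`-valued function gives a lower bound on walk lengths. -/
lemma walk_natDist_le {W : Type*} {G : SimpleGraph W} (f : W → ℕ)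
    (hf : ∀ u v, G.Adj u v → Nat.dist (f u) (f v) ≤ 1) :
    ∀ {x y : W} (w : G.Walk x y), Nat.dist (f x) (f y) ≤ w.length := by
  intro x y w
  induction w with
  | nil => simp [Nat.dist_self]
  | @cons a b c h p ih =>
      calc Nat.dist (f a) (f c) ≤ Nat.dist (f a) (f b) + Nat.dist (f b) (f c) :=
            Nat.dist.triangle_inequality _ _ _
        _ ≤ 1 + p.length := Nat.add_le_add (hf _ _ h) ih
        _ = (SimpleGraph.Walk.cons h p).length := by
            rw [SimpleGraph.Walk.length_cons]; omega

lemma pathGraph_exists_walk (n : ℕ) :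
    ∀ (k : ℕ) (a c : Fin n), Nat.dist a.val c.val = k →
      ∃ w : (pathGraph n).Walk a c, w.length = k := by
  intro k
  induction k with
  | zero =>
      intro a c h
      have : a = c := Fin.ext (Nat.eq_of_dist_eq_zero h)
      subst this
      exact ⟨SimpleGraph.Walk.nil, rfl⟩
  | succ k ih =>
      intro a c h
      have hne : a.val ≠ c.val := by
        intro he; rw [he, Nat.dist_self] at h; omega
      rcases lt_or_gt_of_ne hne with hlt | hgt
      · have hb : a.val + 1 < n := lt_of_le_of_lt hlt c.isLt
        have hadj : (pathGraph n).Adj a ⟨a.val + 1, hb⟩ := by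
          rw [pathGraph_adj]; left; rfl
        obtain ⟨w, hw⟩ := ih ⟨a.val + 1, hb⟩ c (by
          simp only [Nat.dist] at h ⊢; omega)
        exact ⟨SimpleGraph.Walk.cons hadj w, by
          rw [SimpleGraph.Walk.length_cons, hw]⟩
      · have hb : a.val - 1 < n := lt_of_le_of_lt (Nat.sub_le _ _) a.isLt
        have hadj : (pathGraph n).Adj a ⟨a.val - 1, hb⟩ := by
          rw [pathGraph_adj]; right; simp only; omega
        obtain ⟨w, hw⟩ := ih ⟨a.val - 1, hb⟩ c (by
          simp only [Nat.dist] at h ⊢; omega)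
        exact ⟨SimpleGraph.Walk.cons hadj w, by
          rw [SimpleGraph.Walk.length_cons, hw]⟩

/-- The distance formula in the grid graph. -/
lemma grid_dist {s t : ℕ} (x y : Fin s × Fin t) :
    (pathGraph s □ pathGraph t).dist x y
      = Nat.dist x.1.val y.1.val + Nat.dist x.2.val y.2.val := by
  obtain ⟨x1, x2⟩ := x
  obtain ⟨y1, y2⟩ := y
  obtain ⟨w1, hw1⟩ := pathGraph_exists_walk s _ x1 y1 rfl
  obtain ⟨w2, hw2⟩ := pathGraph_exists_walk t _ x2 y2 rfl
  obtain ⟨w, hwl⟩ : ∃ w : (pathGraph s □ pathGraph t).Walk (x1, x2) (y1, y2),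
      w.length = Nat.dist x1.val y1.val + Nat.dist x2.val y2.val :=
    ⟨(w1.map ((pathGraph s).boxProdLeft (pathGraph t) x2).toHom).append
        (w2.map ((pathGraph s).boxProdRight (pathGraph t) y1).toHom), by
      exact (SimpleGraph.Walk.length_append _ _).trans (congrArg₂ (· + ·)
        ((SimpleGraph.Walk.length_map _ _).trans hw1) ((SimpleGraph.Walk.length_map _ _).trans hw2))⟩
  refine le_antisymm ?_ ?_
  · rw [← hwl]; exact SimpleGraph.dist_le _
  · set f : Fin s × Fin t → ℕ :=
      fun p => Nat.dist p.1.val y1.val + Nat.dist p.2.val y2.val with hf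
    have hlip : ∀ u v, (pathGraph s □ pathGraph t).Adj u v →
        Nat.dist (f u) (f v) ≤ 1 := by
      intro u v h
      rcases boxProd_adj.mp h with ⟨h1, h2⟩ | ⟨h1, h2⟩
      · have h2' : u.2.val = v.2.val := by rw [h2]
        rcases pathGraph_adj.mp h1 with h1 | h1 <;>
          · simp only [hf, Nat.dist]; omega
      · have h2' : u.1.val = v.1.val := by rw [h2]
        rcases pathGraph_adj.mp h1 with h1 | h1 <;>
          · simp only [hf, Nat.dist]; omega
    have hr : (pathGraph s □ pathGraph t).Reachable (x1, x2) (y1, y2) := ⟨w⟩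
    obtain ⟨p, hp⟩ := hr.exists_walk_length_eq_dist
    have := walk_natDist_le f hlip p
    rw [hp] at this
    simp only [hf, Nat.dist_self] at this
    calc Nat.dist x1.val y1.val + Nat.dist x2.val y2.val
        = Nat.dist (Nat.dist x1.val y1.val + Nat.dist x2.val y2.val) 0 := by
          simp [Nat.dist]
      _ ≤ _ := by simpa using this

/-- If all points of `S` have equal distances to `p` and `q` with `p ≠ q`,
then `S` is not resolving. -/
lemma no_resolve {s t : ℕ} (S : Set (Fin s × Fin t))
    (hres : IsResolving (pathGraph s □ pathGraph t) S)
    (p q : Fin s × Fin t) (hpq : p ≠ q)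
    (h : ∀ z ∈ S, Nat.dist z.1.val p.1.val + Nat.dist z.2.val p.2.val
        = Nat.dist z.1.val q.1.val + Nat.dist z.2.val q.2.val) : False := by
  obtain ⟨z, hz, hne⟩ := hres p q hpq
  exact hne (by rw [grid_dist, grid_dist]; exact h z hz)

/-- For `s ≥ t ≥ 2`, the grid graph `G = P_s □ P_t` satisfies
`cdim(G) = t`. -/
theorem stmt_18 (s t : ℕ) (ht : 2 ≤ t) (hst : t ≤ s) :
    cdim (pathGraph s □ pathGraph t) = t := by
  have hs : 0 < s := by omega
  have ht0 : 0 < t := by omega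
  -- the vertical segment at column 0
  set f : Fin t → Fin s × Fin t := fun b => ((⟨0, hs⟩ : Fin s), b) with hfdef
  set S0 : Set (Fin s × Fin t) := Set.range f with hS0
  have hmem : t ∈ {n | ∃ S : Set (Fin s × Fin t),
      IsConnResolving (pathGraph s □ pathGraph t) S ∧ S.ncard = n} := by
    refine ⟨S0, ⟨?_, ?_⟩, ?_⟩
    · -- resolving
      intro x y hxy
      by_cases h0 : (pathGraph s □ pathGraph t).dist (f ⟨0, ht0⟩) x
          ≠ (pathGraph s □ pathGraph t).dist (f ⟨0, ht0⟩) y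
      · exact ⟨f ⟨0, ht0⟩, Set.mem_range_self _, h0⟩
      · push_neg at h0
        refine ⟨f ⟨t - 1, by omega⟩, Set.mem_range_self _, ?_⟩
        intro h1
        simp only [grid_dist] at h0 h1
        apply hxy
        have hx2 := x.2.isLt
        have hy2 := y.2.isLt
        simp only [hfdef, Nat.dist] at h0 h1
        have e1 : x.1.val = y.1.val := by omega
        have e2 : x.2.val = y.2.val := by omega
        exact Prod.ext (Fin.ext e1) (Fin.ext e2)
    · -- connected
      have hconn : (pathGraph t).Connected := by
        have := pathGraph_connected (t - 1)
        rwa [Nat.sub_add_cancel (by omega : 1 ≤ t)] at this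
      refine hconn.map
        (f := ⟨fun b => ⟨f b, Set.mem_range_self _⟩, ?_⟩) ?_
      · intro b b' h
        exact Or.inr ⟨h, rfl⟩
      · rintro ⟨p, hp⟩
        obtain ⟨b, hb⟩ := hp
        exact ⟨b, Subtype.ext hb⟩
    · -- cardinality
      have hinj : Function.Injective f := by
        intro a b h
        simpa [hfdef, Prod.ext_iff] using h
      rw [hS0, ← Set.image_univ, Set.ncard_image_of_injective _ hinj,
        Set.ncard_univ, Nat.card_eq_fintype_card, Fintype.card_fin]
  refine le_antisymm (Nat.sInf_le hmem) (le_csInf ⟨t, hmem⟩ ?_)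
  rintro n ⟨S, ⟨hres, hconn⟩, hcard⟩
  by_contra hlt
  push_neg at hlt
  -- S is nonempty and finite
  have hSne : S.Nonempty := Set.nonempty_coe_sort.mp hconn.nonempty
  haveI : Fintype ↥S := S.toFinite.fintype
  have hcardS : Fintype.card ↥S = n := by
    rw [← hcard, Set.ncard_eq_toFinset_card', Set.toFinset_card]
  -- any two points of S are at grid distance ≤ n - 1
  have key : ∀ p ∈ S, ∀ q ∈ S,
      (pathGraph s □ pathGraph t).dist p q ≤ n - 1 := by
    intro p hp q hq
    obtain ⟨w⟩ := hconn.preconnected ⟨p, hp⟩ ⟨q, hq⟩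
    have hpath := w.bypass_isPath
    have hlen : w.bypass.length < n := hcardS ▸ hpath.length_lt
    have hd := SimpleGraph.dist_le
      (w.bypass.map (SimpleGraph.Embedding.induce S).toHom)
    rw [SimpleGraph.Walk.length_map] at hd
    exact hd.trans (by omega)
  -- extremal coordinates
  obtain ⟨pxmax, hpxmax, hxmax⟩ := Set.exists_max_image S (fun z => z.1.val) S.toFinite hSne
  obtain ⟨pxmin, hpxmin, hxmin⟩ := Set.exists_min_image S (fun z => z.1.val) S.toFinite hSne
  obtain ⟨pymax, hpymax, hymax⟩ := Set.exists_max_image S (fun z => z.2.val) S.toFinite hSne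
  obtain ⟨pymin, hpymin, hymin⟩ := Set.exists_min_image S (fun z => z.2.val) S.toFinite hSne
  set X := pxmax.1.val with hXdef
  set xm := pxmin.1.val with hxmdef
  set Y := pymax.2.val with hYdef
  set ym := pymin.2.val with hymdef
  have hXs : X < s := pxmax.1.isLt
  have hYt : Y < t := pymax.2.isLt
  have hxmX : xm ≤ X := hxmin _ hpxmax
  have hymY : ym ≤ Y := hymin _ hpymax
  -- ranges are at most n - 1 ≤ t - 2
  have hrangeX : X - xm ≤ n - 1 := by
    have h1 := key pxmax hpxmax pxmin hpxmin
    rw [grid_dist] at h1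
    have : Nat.dist X xm ≤ n - 1 := le_trans (Nat.le_add_right _ _) h1
    simp only [Nat.dist] at this; omega
  have hrangeY : Y - ym ≤ n - 1 := by
    have h1 := key pymax hpymax pymin hpymin
    rw [grid_dist] at h1
    have : Nat.dist Y ym ≤ n - 1 := le_trans (Nat.le_add_left _ _) h1
    simp only [Nat.dist] at this; omega
  have hub : ∀ z ∈ S, z.1.val ≤ X ∧ xm ≤ z.1.val ∧ z.2.val ≤ Y ∧ ym ≤ z.2.val :=
    fun z hz => ⟨hxmax z hz, hxmin z hz, hymax z hz, hymin z hz⟩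
  have hn1 : n - 1 ≤ t - 2 := by
    have : 0 < n := by
      rw [← hcard]
      exact (Set.ncard_pos S.toFinite).mpr hSne
    omega
  -- case analysis on the position of the bounding box
  by_cases hA : X + 2 ≤ s ∧ Y + 2 ≤ t
  · refine no_resolve S hres (⟨X, by omega⟩, ⟨Y + 1, by omega⟩)
      (⟨X + 1, by omega⟩, ⟨Y, by omega⟩) ?_ ?_
    · intro h
      rw [Prod.mk.injEq, Fin.mk.injEq, Fin.mk.injEq] at h
      omega
    · intro z hz
      obtain ⟨h1, h2, h3, h4⟩ := hub z hz
      simp only [Nat.dist]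
      omega
  by_cases hB : 1 ≤ xm ∧ 1 ≤ ym
  · refine no_resolve S hres (⟨xm - 1, by omega⟩, ⟨ym, by omega⟩)
      (⟨xm, by omega⟩, ⟨ym - 1, by omega⟩) ?_ ?_
    · intro h
      rw [Prod.mk.injEq, Fin.mk.injEq, Fin.mk.injEq] at h
      omega
    · intro z hz
      obtain ⟨h1, h2, h3, h4⟩ := hub z hz
      simp only [Nat.dist]
      omega
  by_cases hC : X + 2 ≤ s ∧ 1 ≤ ym
  · refine no_resolve S hres (⟨X + 1, by omega⟩, ⟨ym, by omega⟩)
      (⟨X, by omega⟩, ⟨ym - 1, by omega⟩) ?_ ?_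
    · intro h
      rw [Prod.mk.injEq, Fin.mk.injEq, Fin.mk.injEq] at h
      omega
    · intro z hz
      obtain ⟨h1, h2, h3, h4⟩ := hub z hz
      simp only [Nat.dist]
      omega
  by_cases hD : 1 ≤ xm ∧ Y + 2 ≤ t
  · refine no_resolve S hres (⟨xm - 1, by omega⟩, ⟨Y, by omega⟩)
      (⟨xm, by omega⟩, ⟨Y + 1, by omega⟩) ?_ ?_
    · intro h
      rw [Prod.mk.injEq, Fin.mk.injEq, Fin.mk.injEq] at h
      omega
    · intro z hz
      obtain ⟨h1, h2, h3, h4⟩ := hub z hz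
      simp only [Nat.dist]
      omega
  · omega
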